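/- arXiv:2207.04641 — 6 statements merged into one kernel-verified Lean document; each statement's English description precedes it below -/
import Mathlib

section
/- Let G be a finite group. Then the number of maximal cyclic subgroups of G is not equal to 2; that is, it is impossible for G to have exactly two maximal cyclic subgroups. -/
/-- A subgroup `M` of `G` is a maximal cyclic subgroup if it is cyclic and is not properly
contained in any cyclic subgroup of `G` other than itself. -/
def IsMaximalCyclic {G : Type*} [Group G] (M : Subgroup G) : Prop :=
  (∃ g : G, M = Subgroup.zpowers g) ∧
    ∀ K : Subgroup G, (∃ g : G, K = Subgroup.zpowers g) → M ≤ K → M = K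

/-- The complement of the enhanced power graph of a group `G`: distinct `x, y` are adjacent
iff no cyclic subgroup of `G` contains both. -/
def coPE (G : Type*) [Group G] : SimpleGraph G where
  Adj x y := x ≠ y ∧ ¬∃ z : G, x ∈ Subgroup.zpowers z ∧ y ∈ Subgroup.zpowers z
  symm := by
    constructor
    rintro x y ⟨h1, h2⟩
    exact ⟨h1.symm, fun ⟨z, hz⟩ => h2 ⟨z, hz.2, hz.1⟩⟩
  loopless := by constructor; rintro x ⟨h, -⟩; exact h rfl

lemma exists_maximalCyclic_mem {G : Type*} [Group G] [Finite G] (g : G) :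
    ∃ M : Subgroup G, IsMaximalCyclic M ∧ g ∈ M := by
  set S : Set (Subgroup G) := {K | (∃ h : G, K = Subgroup.zpowers h) ∧ g ∈ K} with hS
  have hfin : S.Finite := Set.toFinite S
  have hne : S.Nonempty := ⟨Subgroup.zpowers g, ⟨g, rfl⟩, Subgroup.mem_zpowers g⟩
  obtain ⟨M, hMS, hmax⟩ := Set.Finite.exists_maximalFor (fun K : Subgroup G => Nat.card K) S hfin hne
  refine ⟨M, ⟨hMS.1, ?_⟩, hMS.2⟩
  intro K hK hle
  have hKS : K ∈ S := ⟨hK, hle hMS.2⟩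
  have hcard : Nat.card M = Nat.card K :=
    le_antisymm (Subgroup.card_le_of_le hle) (hmax hKS (Subgroup.card_le_of_le hle))
  exact (Subgroup.eq_of_le_of_card_ge hle hcard.ge)

theorem maximalCyclic_card_ne_two {G : Type*} [Group G] [Finite G] :
    Nat.card {M : Subgroup G // IsMaximalCyclic M} ≠ 2 := by
  intro h
  obtain ⟨⟨M₁, hM₁⟩, ⟨M₂, hM₂⟩, hne, huniv⟩ := Nat.card_eq_two_iff.mp h
  have hne' : M₁ ≠ M₂ := fun h => hne (Subtype.ext h)
  -- every element is in M₁ or M₂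
  have hmem : ∀ g : G, g ∈ M₁ ∨ g ∈ M₂ := by
    intro g
    obtain ⟨M, hM, hg⟩ := exists_maximalCyclic_mem g
    have : (⟨M, hM⟩ : {M : Subgroup G // IsMaximalCyclic M}) ∈
        ({⟨M₁, hM₁⟩, ⟨M₂, hM₂⟩} : Set _) := huniv ▸ Set.mem_univ _
    rcases this with h | h
    · left; rw [← show M = M₁ from congrArg Subtype.val h]; exact hg
    · right; rw [← show M = M₂ from congrArg Subtype.val h]; exact hg
  -- neither is contained in the other
  have h12 : ¬ M₁ ≤ M₂ := fun hle => hne' (hM₁.2 M₂ hM₂.1 hle)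
  have h21 : ¬ M₂ ≤ M₁ := fun hle => hne' (hM₂.2 M₁ hM₁.1 hle).symm
  obtain ⟨a, ha1, ha2⟩ := SetLike.not_le_iff_exists.mp h12
  obtain ⟨b, hb2, hb1⟩ := SetLike.not_le_iff_exists.mp h21
  rcases hmem (a * b) with hab | hab
  · exact hb1 (by simpa using mul_mem (inv_mem ha1) hab)
  · exact ha2 (by simpa using mul_mem hab (inv_mem hb2))
end

section
/- Let G be a finite group. Then the clique number of the complement of the enhanced power graph of G equals the number of maximal cyclic subgroups of G. -/
lemma exists_isMaximalCyclic_mem {G : Type*} [Group G] [Finite G] (x : G) :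
    ∃ M : Subgroup G, IsMaximalCyclic M ∧ x ∈ M := by
  have hS : ({K : Subgroup G | (∃ g, K = Subgroup.zpowers g) ∧
      Subgroup.zpowers x ≤ K}).Finite := Set.toFinite _
  obtain ⟨M, ⟨hMc, hxM⟩, hmax⟩ := Set.Finite.exists_maximalFor id _ hS
    ⟨Subgroup.zpowers x, ⟨x, rfl⟩, le_rfl⟩
  exact ⟨M, ⟨hMc, fun K hKc hMK => le_antisymm hMK (hmax (j := K) ⟨hKc, hxM.trans hMK⟩ hMK)⟩,
    hxM (Subgroup.mem_zpowers x)⟩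

theorem coPE_cliqueNum {G : Type*} [Group G] [Finite G] :
    (coPE G).cliqueNum = Nat.card {M : Subgroup G // IsMaximalCyclic M} := by
  classical
  cases nonempty_fintype G
  rw [Nat.card_eq_fintype_card]
  apply le_antisymm
  · obtain ⟨s, hs⟩ := (coPE G).exists_isNClique_cliqueNum
    rw [← hs.card_eq]
    choose f hf hmem using fun x : G => exists_isMaximalCyclic_mem x
    rw [← Finset.card_univ]
    apply Finset.card_le_card_of_injOn
      (fun x => (⟨f x, hf x⟩ : {M : Subgroup G // IsMaximalCyclic M}))
      (fun x _ => Finset.mem_univ _)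
    intro x hx y hy hxy
    by_contra hne
    have hadj := hs.isClique hx hy hne
    obtain ⟨g, hg⟩ := (hf x).1
    have hfxy : f x = f y := congrArg Subtype.val hxy
    exact hadj.2 ⟨g, hg ▸ hmem x, (hfxy ▸ hg) ▸ hmem y⟩
  · choose gen hgen using fun M : {M : Subgroup G // IsMaximalCyclic M} => M.2.1
    have hginj : Function.Injective gen := by
      intro M N h
      exact Subtype.ext (by rw [hgen M, hgen N, h])
    have hcard : (Finset.univ.image gen).card =
        Fintype.card {M : Subgroup G // IsMaximalCyclic M} := by
      rw [Finset.card_image_of_injective _ hginj, Finset.card_univ]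
    rw [← hcard]
    apply SimpleGraph.IsClique.card_le_cliqueNum (tc := ?_)
    intro x hx y hy hne
    simp only [Finset.coe_image, Set.mem_image] at hx hy
    obtain ⟨M, -, rfl⟩ := hx
    obtain ⟨N, -, rfl⟩ := hy
    refine ⟨hne, ?_⟩
    rintro ⟨z, hzM, hzN⟩
    have hM : M.1 = Subgroup.zpowers z :=
      M.2.2 _ ⟨z, rfl⟩ (by rw [hgen M]; exact (Subgroup.zpowers_le).mpr hzM)
    have hN : N.1 = Subgroup.zpowers z :=
      N.2.2 _ ⟨z, rfl⟩ (by rw [hgen N]; exact (Subgroup.zpowers_le).mpr hzN)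
    exact hne (congrArg gen (Subtype.ext (hM.trans hN.symm)))
end

section
/- Let G be a finite non-cyclic group. Then the graph co-P_E(G*) is a complete graph if and only if G is an elementary abelian 2-group, i.e., G is isomorphic to a direct product Z_2 × Z_2 × ⋯ × Z_2 (equivalently, every element of G satisfies x² = e). -/
/-- The set of non-isolated vertices of `coPE G`. -/
def nonIsolated (G : Type*) [Group G] : Set G := {x | ∃ y, (coPE G).Adj x y}

/-- The subgraph of `coPE G` induced by its non-isolated vertices. -/
def coPEstar (G : Type*) [Group G] : SimpleGraph (nonIsolated G) :=
  (coPE G).induce (nonIsolated G)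

theorem coPEstar_complete_iff {G : Type*} [Group G] [Finite G] (hG : ¬ IsCyclic G) :
    coPEstar G = ⊤ ↔ ∀ x : G, x * x = 1 := by
  constructor
  · intro h x
    by_contra hx
    haveI : Nonempty {g : G // x ∈ Subgroup.zpowers g} := ⟨⟨x, Subgroup.mem_zpowers x⟩⟩
    obtain ⟨⟨g, hgx⟩, hmax⟩ :=
      Finite.exists_max (fun p : {g : G // x ∈ Subgroup.zpowers g} => orderOf p.1)
    -- maximality: any cyclic subgroup containing g equals ⟨g⟩
    have hM : ∀ z : G, g ∈ Subgroup.zpowers z → Subgroup.zpowers z = Subgroup.zpowers g := by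
      intro z hz
      have hle : Subgroup.zpowers g ≤ Subgroup.zpowers z := Subgroup.zpowers_le.mpr hz
      have hxz : x ∈ Subgroup.zpowers z := hle hgx
      have h1 : orderOf z ≤ orderOf g := hmax ⟨z, hxz⟩
      refine (Subgroup.eq_of_le_of_card_ge hle ?_).symm
      rw [Nat.card_zpowers, Nat.card_zpowers]
      exact h1
    -- g * g ≠ 1
    have hg2 : g * g ≠ 1 := by
      intro hgg
      obtain ⟨n, rfl⟩ := hgx
      apply hx
      have h2 : g ^ (2 : ℤ) = 1 := by rw [zpow_two]; exact hgg
      calc g ^ n * g ^ n = g ^ (2 * n) := by rw [two_mul, zpow_add]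
        _ = (g ^ (2:ℤ)) ^ n := by rw [zpow_mul]
        _ = 1 := by rw [h2, one_zpow]
    have hne : g ≠ g⁻¹ := by
      intro hgi
      have hc := mul_inv_cancel g
      rw [← hgi] at hc
      exact hg2 hc
    -- b outside ⟨g⟩
    obtain ⟨b, hb⟩ : ∃ b : G, b ∉ Subgroup.zpowers g := by
      by_contra hcon
      push_neg at hcon
      exact hG ⟨⟨g, hcon⟩⟩
    -- g and g⁻¹ are non-isolated
    have hgiso : g ∈ nonIsolated G := by
      refine ⟨b, fun hgb => hb (hgb ▸ Subgroup.mem_zpowers g), ?_⟩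
      rintro ⟨z, hz1, hz2⟩
      exact hb (hM z hz1 ▸ hz2)
    have hginv : g⁻¹ ∈ nonIsolated G := by
      refine ⟨b, fun hgb => hb (by rw [← hgb]; exact Subgroup.inv_mem _ (Subgroup.mem_zpowers g)), ?_⟩
      rintro ⟨z, hz1, hz2⟩
      exact hb (hM z ((Subgroup.inv_mem_iff _).mp hz1) ▸ hz2)
    have hadj : (coPEstar G).Adj ⟨g, hgiso⟩ ⟨g⁻¹, hginv⟩ := by
      rw [h]
      exact fun heq => hne (congrArg Subtype.val heq)
    exact hadj.2 ⟨g, Subgroup.mem_zpowers g, Subgroup.inv_mem _ (Subgroup.mem_zpowers g)⟩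
  · intro h
    have h1iso : (1 : G) ∉ nonIsolated G := by
      rintro ⟨y, hy1, hy2⟩
      exact hy2 ⟨y, Subgroup.one_mem _, Subgroup.mem_zpowers y⟩
    have key : ∀ (z a : G), z * z = 1 → a ∈ Subgroup.zpowers z → a ≠ 1 → a = z := by
      rintro z a hz ⟨n, rfl⟩ ha
      have h2 : z ^ (2 : ℤ) = 1 := by rw [zpow_two]; exact hz
      rcases Int.even_or_odd n with ⟨k, hk⟩ | ⟨k, hk⟩
      · exfalso
        apply ha
        show z ^ n = 1
        rw [hk, ← two_mul, zpow_mul, h2, one_zpow]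
      · show z ^ n = z
        rw [hk, zpow_add, zpow_mul, h2, one_zpow, one_mul, zpow_one]
    ext ⟨a, ha⟩ ⟨b, hb⟩
    rw [SimpleGraph.top_adj]
    show (a ≠ b ∧ ¬∃ z : G, a ∈ Subgroup.zpowers z ∧ b ∈ Subgroup.zpowers z) ↔ _
    constructor
    · intro hadj
      exact fun heq => hadj.1 (congrArg Subtype.val heq)
    · intro hne
      have hab : a ≠ b := fun heq => hne (Subtype.ext heq)
      refine ⟨hab, ?_⟩
      rintro ⟨z, hz1, hz2⟩
      have ha1 : a ≠ 1 := fun heq => h1iso (heq ▸ ha)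
      have hb1 : b ≠ 1 := fun heq => h1iso (heq ▸ hb)
      exact hab ((key z a (h z) hz1 ha1).trans (key z b (h z) hz2 hb1).symm)
end

section
/- Let G be a finite non-cyclic group whose order is a power of 2. Then the graph co-P_E(G*) is Eulerian (connected with a closed trail traversing every edge exactly once). -/
open scoped Classical in
/-- A graph is Eulerian if it is connected and admits a closed trail traversing
every edge exactly once. -/
def IsEulerianGraph {V : Type*} (Γ : SimpleGraph V) : Prop :=
  Γ.Connected ∧ ∃ (v : V) (p : Γ.Walk v v), p.IsEulerian

/-! ### Existence of Eulerian circuits (Hierholzer) -/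

open SimpleGraph

section Euler

set_option linter.unusedSectionVars false

variable {V : Type*} [Fintype V] [DecidableEq V] {Γ : SimpleGraph V} [DecidableRel Γ.Adj]

lemma trail_edges_length_le {u v : V} {p : Γ.Walk u v} (hp : p.IsTrail) :
    p.edges.length ≤ Γ.edgeFinset.card := by
  classical
  have h1 : p.edges.toFinset ⊆ Γ.edgeFinset := by
    intro e he
    rw [List.mem_toFinset] at he
    exact mem_edgeFinset.mpr (p.edges_subset_edgeSet he)
  calc p.edges.length = p.edges.toFinset.card := (List.toFinset_card_of_nodup hp.edges_nodup).symm
    _ ≤ _ := Finset.card_le_card h1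

lemma exists_unused_edge (heven : ∀ x : V, Even (Γ.degree x)) {w u : V} {p : Γ.Walk w u}
    (hp : p.IsTrail) (hne : u ≠ w) : ∃ x, Γ.Adj u x ∧ s(u, x) ∉ p.edges := by
  classical
  have hodd : ¬ Even (p.edges.countP fun e => u ∈ e) := by
    intro hev
    exact absurd rfl ((hp.even_countP_edges_iff u).mp hev hne.symm).2
  have hfil : (hp.edgesFinset.filter (fun e => u ∈ e)).card = p.edges.countP fun e => u ∈ e := by
    rw [← Multiset.coe_countP, Multiset.countP_eq_card_filter]
    rfl
  have hsub : hp.edgesFinset.filter (fun e => u ∈ e) ⊆ Γ.incidenceFinset u := by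
    intro e he
    rw [Finset.mem_filter] at he
    rw [mem_incidenceFinset]
    exact ⟨p.edges_subset_edgeSet (Multiset.mem_coe.mp (Finset.mem_mk.mp he.1)), he.2⟩
  have hne' : hp.edgesFinset.filter (fun e => u ∈ e) ≠ Γ.incidenceFinset u := by
    intro h
    apply hodd
    rw [← hfil, h, card_incidenceFinset_eq_degree]
    exact heven u
  obtain ⟨e, he, hnot⟩ := Finset.exists_of_ssubset (lt_of_le_of_ne hsub hne')
  rw [mem_incidenceFinset, incidenceSet] at he
  obtain ⟨hee, hue⟩ := he
  induction e with
  | h a b =>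
    have hadj : Γ.Adj a b := hee
    have hnotp : s(a, b) ∉ p.edges := by
      intro hmem
      exact hnot (Finset.mem_filter.mpr ⟨Finset.mem_mk.mpr (Multiset.mem_coe.mpr hmem), hue⟩)
    rw [Sym2.mem_iff] at hue
    rcases hue with rfl | rfl
    · exact ⟨b, hadj, hnotp⟩
    · exact ⟨a, hadj.symm, by rwa [Sym2.eq_swap]⟩

lemma exists_closing (heven : ∀ x : V, Even (Γ.degree x)) :
    ∀ (n : ℕ) {w u : V} (p : Γ.Walk w u), p.IsTrail →
      Γ.edgeFinset.card - p.edges.length ≤ n → ∃ q : Γ.Walk u w, (p.append q).IsTrail := by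
  intro n
  induction n with
  | zero =>
    intro w u p hp hlen
    rcases eq_or_ne u w with rfl | hne
    · exact ⟨Walk.nil, by simpa using hp⟩
    · exfalso
      obtain ⟨x, hadj, hnot⟩ := exists_unused_edge heven hp hne
      have hext : (p.concat hadj).IsTrail := by
        rw [Walk.isTrail_def, Walk.edges_concat]
        exact List.Nodup.concat (by simpa using hnot) hp.edges_nodup
      have h1 := trail_edges_length_le hext
      rw [Walk.edges_concat, List.length_concat] at h1
      omega
  | succ n ih =>
    intro w u p hp hlen
    rcases eq_or_ne u w with rfl | hne
    · exact ⟨Walk.nil, by simpa using hp⟩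
    · obtain ⟨x, hadj, hnot⟩ := exists_unused_edge heven hp hne
      have hext : (p.concat hadj).IsTrail := by
        rw [Walk.isTrail_def, Walk.edges_concat]
        exact List.Nodup.concat (by simpa using hnot) hp.edges_nodup
      have hlen' : Γ.edgeFinset.card - (p.concat hadj).edges.length ≤ n := by
        rw [Walk.edges_concat, List.length_concat]
        omega
      obtain ⟨q, hq⟩ := ih (p.concat hadj) hext hlen'
      refine ⟨Walk.cons hadj q, ?_⟩
      rwa [Walk.concat_eq_append, ← Walk.append_assoc, Walk.cons_append, Walk.nil_append] at hq

lemma start_mem_rotate_support {v w : V} (p : Γ.Walk v v) (hw : w ∈ p.support) :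
    v ∈ (p.rotate w hw).support := by
  rw [Walk.rotate]
  rw [Walk.mem_support_append_iff]
  exact Or.inl (p.dropUntil w hw).end_mem_support

lemma reach_unused {v : V} (p : Γ.Walk v v) :
    ∀ {c d : V} (_ : Γ.Walk c d), c ∈ p.support → (∃ x, Γ.Adj d x ∧ s(d, x) ∉ p.edges) →
      ∃ w x, w ∈ p.support ∧ Γ.Adj w x ∧ s(w, x) ∉ p.edges := by
  intro c d q
  induction q with
  | nil =>
    intro hc ⟨x, hx, hnx⟩
    exact ⟨_, x, hc, hx, hnx⟩
  | cons h q' ih =>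
    rename_i c' d' _
    intro hc hex
    by_cases hcd : s(c', d') ∈ p.edges
    · exact ih (p.snd_mem_support_of_mem_edges hcd) hex
    · exact ⟨c', d', hc, h, hcd⟩

lemma exists_incident_unused (hconn : Γ.Preconnected) {v : V} (p : Γ.Walk v v)
    {e : Sym2 V} (he : e ∈ Γ.edgeSet) (hnot : e ∉ p.edges) :
    ∃ w x, w ∈ p.support ∧ Γ.Adj w x ∧ s(w, x) ∉ p.edges := by
  induction e with
  | h a b =>
    have hadj : Γ.Adj a b := he
    obtain ⟨q⟩ := hconn v a
    exact reach_unused p q p.start_mem_support ⟨b, hadj, hnot⟩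

lemma euler_step (heven : ∀ x : V, Even (Γ.degree x)) (hconn : Γ.Preconnected) :
    ∀ (n : ℕ) {v : V} (p : Γ.Walk v v), p.IsTrail →
      Γ.edgeFinset.card - p.edges.length ≤ n → ∃ c : Γ.Walk v v, c.IsEulerian := by
  intro n
  induction n with
  | zero =>
    intro v p hp hlen
    refine ⟨p, hp.isEulerian_of_forall_mem fun e he => ?_⟩
    by_contra hne
    obtain ⟨w, x, hw, hadj, hnot⟩ := exists_incident_unused hconn p he hne
    have hrot : ((p.rotate w hw).concat hadj).IsTrail := by
      rw [Walk.isTrail_def, Walk.edges_concat]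
      refine List.Nodup.concat ?_ ((p.rotate_edges w hw).perm.nodup_iff.mpr hp.edges_nodup)
      intro hmem
      exact hnot ((p.rotate_edges w hw).perm.mem_iff.mp hmem)
    have h1 := trail_edges_length_le hrot
    have h2 := (p.rotate_edges w hw).perm.length_eq
    rw [Walk.edges_concat, List.length_concat] at h1
    omega
  | succ n ih =>
    intro v p hp hlen
    by_cases hall : ∀ e ∈ Γ.edgeSet, e ∈ p.edges
    · exact ⟨p, hp.isEulerian_of_forall_mem hall⟩
    · push_neg at hall
      obtain ⟨e, he, hne⟩ := hall
      obtain ⟨w, x, hw, hadj, hnot⟩ := exists_incident_unused hconn p he hne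
      have hrotTrail : (p.rotate w hw).IsTrail := by
        rw [Walk.isTrail_def]
        exact (p.rotate_edges w hw).perm.nodup_iff.mpr hp.edges_nodup
      have hrot : ((p.rotate w hw).concat hadj).IsTrail := by
        rw [Walk.isTrail_def, Walk.edges_concat]
        refine List.Nodup.concat ?_ hrotTrail.edges_nodup
        intro hmem
        exact hnot ((p.rotate_edges w hw).perm.mem_iff.mp hmem)
      obtain ⟨q, hq⟩ := exists_closing heven (Γ.edgeFinset.card) ((p.rotate w hw).concat hadj)
        hrot (Nat.sub_le _ _)
      set c : Γ.Walk w w := ((p.rotate w hw).concat hadj).append q with hc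
      have hvmem : v ∈ c.support := by
        rw [hc, Walk.mem_support_append_iff]
        left
        rw [Walk.concat_eq_append, Walk.mem_support_append_iff]
        exact Or.inl (start_mem_rotate_support p hw)
      have hcTrail : (c.rotate v hvmem).IsTrail := by
        rw [Walk.isTrail_def]
        exact (c.rotate_edges v hvmem).perm.nodup_iff.mpr hq.edges_nodup
      have hlen' : Γ.edgeFinset.card - (c.rotate v hvmem).edges.length ≤ n := by
        have h2 := (c.rotate_edges v hvmem).perm.length_eq
        have h3 : c.edges.length = (p.rotate w hw).edges.length + 1 + q.edges.length := by
          rw [hc, Walk.edges_append, Walk.edges_concat, List.length_append, List.length_concat]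
        have h4 := (p.rotate_edges w hw).perm.length_eq
        omega
      exact ih (c.rotate v hvmem) hcTrail hlen'

theorem eulerian_of_even_degree (hconn : Γ.Connected) (heven : ∀ x : V, Even (Γ.degree x)) :
    ∃ (v : V) (p : Γ.Walk v v), p.IsEulerian := by
  obtain ⟨v⟩ := hconn.nonempty
  obtain ⟨c, hc⟩ := euler_step heven hconn.preconnected (Γ.edgeFinset.card)
    (Walk.nil : Γ.Walk v v) (by simp [Walk.isTrail_def]) (by simp)
  exact ⟨v, c, hc⟩

end Euler

/-! ### Parity helper -/

lemma even_card_invol {α : Type*} [DecidableEq α] :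
    ∀ (s : Finset α) (f : α → α), (∀ a ∈ s, f a ∈ s ∧ f (f a) = a ∧ f a ≠ a) → Even s.card := by
  intro s
  induction s using Finset.strongInduction with
  | _ s ih =>
    intro f hf
    rcases s.eq_empty_or_nonempty with rfl | ⟨a, ha⟩
    · simp
    · obtain ⟨hfa, hffa, hne⟩ := hf a ha
      set t := (s.erase a).erase (f a) with hdef
      have htss : t ⊂ s := Finset.ssubset_of_subset_of_ssubset
        (Finset.erase_subset _ _) (Finset.erase_ssubset ha)
      have hmem : ∀ b, b ∈ t ↔ b ∈ s ∧ b ≠ a ∧ b ≠ f a := by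
        intro b
        simp only [hdef, Finset.mem_erase]
        tauto
      have hstep : ∀ b ∈ t, f b ∈ t ∧ f (f b) = b ∧ f b ≠ b := by
        intro b hb
        rw [hmem] at hb
        obtain ⟨hbs, hba, hbfa⟩ := hb
        obtain ⟨h1, h2, h3⟩ := hf b hbs
        refine ⟨(hmem _).mpr ⟨h1, ?_, ?_⟩, h2, h3⟩
        · intro h; exact hbfa (by rw [← h2, h])
        · intro h
          exact hba (by rw [← hffa, ← h, h2])
      have heven := ih t htss f hstep
      have hcard : s.card = t.card + 2 := by
        have h1 : f a ∈ s.erase a := Finset.mem_erase.mpr ⟨hne, hfa⟩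
        have e1 : (s.erase a).card = s.card - 1 := Finset.card_erase_of_mem ha
        have e2 : t.card = (s.erase a).card - 1 := Finset.card_erase_of_mem h1
        have p1 := Finset.card_pos.mpr ⟨a, ha⟩
        have p2 := Finset.card_pos.mpr ⟨f a, h1⟩
        omega
      obtain ⟨k, hk⟩ := heven
      exact ⟨k + 1, by omega⟩

/-! ### Group-theoretic lemmas -/

section GroupPart

set_option linter.unusedSectionVars false

variable {G : Type*} [Group G] [Finite G]

lemma mem_nonIsolated_of_adj {x y : G} (h : (coPE G).Adj x y) : y ∈ nonIsolated G :=
  ⟨x, h.symm⟩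

lemma ne_one_of_nonIsolated {x : G} (hx : x ∈ nonIsolated G) : x ≠ 1 := by
  rintro rfl
  obtain ⟨y, -, h2⟩ := hx
  exact h2 ⟨y, Subgroup.one_mem _, Subgroup.mem_zpowers y⟩

lemma exists_maxcyc (x : G) :
    ∃ g : G, IsMaximalCyclic (Subgroup.zpowers g) ∧ x ∈ Subgroup.zpowers g := by
  haveI : Finite (Subgroup G) :=
    Finite.of_injective (fun H => (H : Set G)) SetLike.coe_injective
  set s : Set (Subgroup G) := {K | (∃ g, K = Subgroup.zpowers g) ∧ x ∈ K} with hs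
  obtain ⟨M, hMs, hmax⟩ := Set.Finite.exists_maximalFor id s (Set.toFinite s)
    ⟨Subgroup.zpowers x, ⟨x, rfl⟩, Subgroup.mem_zpowers x⟩
  obtain ⟨⟨g, rfl⟩, hxM⟩ := hMs
  refine ⟨g, ⟨⟨g, rfl⟩, fun K hK hle => ?_⟩, hxM⟩
  exact le_antisymm hle (hmax (j := K) ⟨hK, hle hxM⟩ hle)

lemma adj_gen {g y : G} (hM : IsMaximalCyclic (Subgroup.zpowers g))
    (hy : y ∉ Subgroup.zpowers g) : (coPE G).Adj g y := by
  constructor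
  · rintro rfl; exact hy (Subgroup.mem_zpowers g)
  · rintro ⟨z, hgz, hyz⟩
    have heq := hM.2 (Subgroup.zpowers z) ⟨z, rfl⟩ (Subgroup.zpowers_le.mpr hgz)
    exact hy (heq.symm ▸ hyz)

lemma adj_maxgen_of_nonIsolated {x : G} (hx : x ∈ nonIsolated G) :
    ∃ h : G, IsMaximalCyclic (Subgroup.zpowers h) ∧ (coPE G).Adj x h := by
  obtain ⟨y, hadj⟩ := hx
  obtain ⟨h, hM, hyh⟩ := exists_maxcyc y
  have hxh : x ∉ Subgroup.zpowers h := by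
    intro hmem
    exact hadj.2 ⟨h, hmem, hyh⟩
  exact ⟨h, hM, (adj_gen hM hxh).symm⟩

lemma exists_two_maxcyc (hG : ¬ IsCyclic G) :
    ∃ g₀ g₁ : G, IsMaximalCyclic (Subgroup.zpowers g₀) ∧ IsMaximalCyclic (Subgroup.zpowers g₁) ∧
      Subgroup.zpowers g₀ ≠ Subgroup.zpowers g₁ := by
  obtain ⟨g₀, hM0, -⟩ := exists_maxcyc (1 : G)
  have hne : Subgroup.zpowers g₀ ≠ ⊤ := by
    intro h
    apply hG
    constructor
    refine ⟨g₀, fun a => ?_⟩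
    have : a ∈ Subgroup.zpowers g₀ := h ▸ Subgroup.mem_top a
    obtain ⟨n, hn⟩ := this
    exact ⟨n, hn⟩
  obtain ⟨y, hy⟩ : ∃ y : G, y ∉ Subgroup.zpowers g₀ := by
    by_contra h
    push_neg at h
    exact hne ((Subgroup.eq_top_iff' _).mpr h)
  obtain ⟨g₁, hM1, hyg1⟩ := exists_maxcyc y
  exact ⟨g₀, g₁, hM0, hM1, fun h => hy (h ▸ hyg1)⟩

lemma adj_gens {g₀ g₁ : G} (h0 : IsMaximalCyclic (Subgroup.zpowers g₀))
    (h1 : IsMaximalCyclic (Subgroup.zpowers g₁))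
    (hne : Subgroup.zpowers g₀ ≠ Subgroup.zpowers g₁) : (coPE G).Adj g₀ g₁ := by
  apply adj_gen h0
  intro hmem
  have hle : Subgroup.zpowers g₁ ≤ Subgroup.zpowers g₀ := Subgroup.zpowers_le.mpr hmem
  exact hne (h1.2 _ ⟨g₀, rfl⟩ hle).symm

lemma exists_sqrt_one (h2 : ∃ k : ℕ, Nat.card G = 2 ^ k) {x : G} (hx : x ≠ 1) :
    ∃ t : G, t ∈ Subgroup.zpowers x ∧ t ≠ 1 ∧ t * t = 1 := by
  obtain ⟨k, hk⟩ := h2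
  have hdvd : orderOf x ∣ 2 ^ k := hk ▸ orderOf_dvd_natCard x
  obtain ⟨m, hmk, hm⟩ := (Nat.dvd_prime_pow Nat.prime_two).mp hdvd
  have hm1 : 1 ≤ m := by
    rcases Nat.eq_zero_or_pos m with rfl | h
    · exfalso; apply hx; rw [← orderOf_eq_one_iff]; simpa using hm
    · exact h
  refine ⟨x ^ (2 ^ (m - 1)), pow_mem (Subgroup.mem_zpowers x) _, ?_, ?_⟩
  · intro h
    have hdvd' : orderOf x ∣ 2 ^ (m - 1) := orderOf_dvd_of_pow_eq_one h
    rw [hm] at hdvd'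
    have := (Nat.pow_dvd_pow_iff_le_right (by norm_num : 1 < 2)).mp hdvd'
    omega
  · rw [← pow_add]
    have hpow : 2 ^ (m - 1) + 2 ^ (m - 1) = 2 ^ m := by
      rw [← two_mul, ← pow_succ']
      congr 1
      omega
    rw [hpow, ← hm, pow_orderOf_eq_one]

lemma even_shared_card [Fintype G] [DecidableEq G]
    (h2 : ∃ k : ℕ, Nat.card G = 2 ^ k) {x : G} (hx : x ≠ 1)
    [DecidablePred fun y : G => ∃ z : G, x ∈ Subgroup.zpowers z ∧ y ∈ Subgroup.zpowers z] :
    Even ((Finset.univ.filter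
      fun y : G => ∃ z : G, x ∈ Subgroup.zpowers z ∧ y ∈ Subgroup.zpowers z).card) := by
  obtain ⟨t, htx, ht1, htt⟩ := exists_sqrt_one h2 hx
  apply even_card_invol _ (fun y => y * t)
  intro a ha
  rw [Finset.mem_filter] at ha
  obtain ⟨-, z, hxz, haz⟩ := ha
  refine ⟨Finset.mem_filter.mpr ⟨Finset.mem_univ _,
    z, hxz, mul_mem haz (Subgroup.zpowers_le.mpr hxz htx)⟩,
    by rw [mul_assoc, htt, mul_one], fun h => ht1 (mul_eq_left.mp h)⟩

end GroupPart

theorem coPEstar_eulerian_of_two_group {G : Type*} [Group G] [Finite G]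
    (hG : ¬ IsCyclic G) (h2 : ∃ k : ℕ, Nat.card G = 2 ^ k) :
    IsEulerianGraph (coPEstar G) := by
  classical
  haveI : Fintype G := Fintype.ofFinite G
  letI : DecidableEq (nonIsolated G) := fun a b => Classical.propDecidable (a = b)
  haveI : Fintype (nonIsolated G) := Fintype.ofFinite _
  -- connectivity
  obtain ⟨g₀, g₁, h0, h1, hne01⟩ := exists_two_maxcyc hG
  have hadj01 : (coPE G).Adj g₀ g₁ := adj_gens h0 h1 hne01
  have hg₀ : g₀ ∈ nonIsolated G := ⟨g₁, hadj01⟩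
  have hg₁ : g₁ ∈ nonIsolated G := ⟨g₀, hadj01.symm⟩
  have hstar_adj : ∀ {a b : G} (ha : a ∈ nonIsolated G) (hb : b ∈ nonIsolated G),
      (coPE G).Adj a b → (coPEstar G).Adj ⟨a, ha⟩ ⟨b, hb⟩ := by
    intro a b ha hb h
    exact h
  have key : ∀ (x : G) (hx : x ∈ nonIsolated G),
      (coPEstar G).Reachable ⟨x, hx⟩ ⟨g₀, hg₀⟩ := by
    intro x hx
    obtain ⟨h, hMh, hadjxh⟩ := adj_maxgen_of_nonIsolated hx
    have hh : h ∈ nonIsolated G := mem_nonIsolated_of_adj hadjxh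
    have step1 : (coPEstar G).Reachable ⟨x, hx⟩ ⟨h, hh⟩ :=
      (hstar_adj hx hh hadjxh).reachable
    by_cases hcase : Subgroup.zpowers h = Subgroup.zpowers g₀
    · have hadjh1 : (coPE G).Adj h g₁ := adj_gens hMh h1 (by rw [hcase]; exact hne01)
      exact step1.trans (((hstar_adj hh hg₁ hadjh1).reachable).trans
        ((hstar_adj hg₁ hg₀ hadj01.symm).reachable))
    · have hadjh0 : (coPE G).Adj h g₀ := adj_gens hMh h0 hcase
      exact step1.trans (hstar_adj hh hg₀ hadjh0).reachable
  have hconn : (coPEstar G).Connected := by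
    rw [connected_iff]
    refine ⟨fun a b => ?_, ⟨⟨g₀, hg₀⟩⟩⟩
    exact (key a.1 a.2).trans (key b.1 b.2).symm
  -- even degrees
  have heven : ∀ v : nonIsolated G, Even ((coPEstar G).degree v) := by
    rintro ⟨x, hx⟩
    have hxne : x ≠ 1 := ne_one_of_nonIsolated hx
    -- degree equals the number of coPE-neighbours of x in G
    have hdeg : (coPEstar G).degree ⟨x, hx⟩ =
        (Finset.univ.filter fun y : G => (coPE G).Adj x y).card := by
      rw [← card_neighborFinset_eq_degree]
      refine Finset.card_bij (fun a _ => (a : G)) ?_ ?_ ?_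
      · intro a ha
        rw [mem_neighborFinset] at ha
        exact Finset.mem_filter.mpr ⟨Finset.mem_univ _, ha⟩
      · intro a _ b _ hab
        exact Subtype.ext hab
      · intro y hy
        rw [Finset.mem_filter] at hy
        have hyiso : y ∈ nonIsolated G := mem_nonIsolated_of_adj hy.2
        exact ⟨⟨y, hyiso⟩, (mem_neighborFinset _ _ _).mpr (hstar_adj hx hyiso hy.2), rfl⟩
    rw [hdeg]
    -- the neighbours are the complement of the "shared cyclic subgroup" set
    have hcompl : (Finset.univ.filter fun y : G => (coPE G).Adj x y) =
        Finset.univ \ (Finset.univ.filter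
          fun y : G => ∃ z : G, x ∈ Subgroup.zpowers z ∧ y ∈ Subgroup.zpowers z) := by
      ext y
      simp only [Finset.mem_filter, Finset.mem_univ, true_and, Finset.mem_sdiff]
      constructor
      · intro h
        exact fun hsh => h.2 hsh
      · intro h
        refine ⟨fun heq => h ⟨x, Subgroup.mem_zpowers x, heq ▸ Subgroup.mem_zpowers x⟩, h⟩
    rw [hcompl, Finset.card_sdiff_of_subset (Finset.filter_subset _ _)]
    have hGeven : Even (Finset.univ : Finset G).card := by
      obtain ⟨k, hk⟩ := h2
      have hcard : (Finset.univ : Finset G).card = 2 ^ k := by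
        rw [Finset.card_univ, ← Nat.card_eq_fintype_card, hk]
      rcases Nat.eq_zero_or_pos k with rfl | hkpos
      · exfalso
        apply hG
        have : Nat.card G = 1 := by simpa using hk
        haveI : Subsingleton G := Nat.card_eq_one_iff_unique.mp this |>.1
        infer_instance
      · rw [hcard]
        exact (Nat.even_pow' (by omega)).mpr (by norm_num)
    have hShared := even_shared_card (G := G) h2 hxne
    rw [Nat.even_sub (Finset.card_le_card (Finset.filter_subset _ _))]
    constructor <;> intro <;> [exact hShared; exact hGeven]
  obtain ⟨v, p, hp⟩ := eulerian_of_even_degree hconn heven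
  exact ⟨hconn, v, p, hp⟩
end

section
/- Let n ≥ 3 and let D_{2n} be the dihedral group of order 2n. Then the graph co-P_E(D_{2n}*) is Eulerian (connected with a closed trail traversing every edge exactly once) if and only if n is even. -/
open DihedralGroup

private def rotSub (n : ℕ) : Subgroup (DihedralGroup n) where
  carrier := {x | ∃ i, x = r i}
  one_mem' := ⟨0, one_def.symm ▸ rfl⟩
  mul_mem' := by rintro _ _ ⟨i, rfl⟩ ⟨j, rfl⟩; exact ⟨i + j, (r_mul_r i j).symm⟩
  inv_mem' := by
    rintro _ ⟨i, rfl⟩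
    exact ⟨-i, by rw [eq_comm, eq_inv_iff_mul_eq_one, r_mul_r, neg_add_cancel, one_def]⟩

private lemma sr_not_mem_zpowers_r {n : ℕ} (i j : ZMod n) :
    sr i ∉ Subgroup.zpowers (r j) := by
  intro h
  have := (Subgroup.zpowers_le.mpr (show r j ∈ rotSub n from ⟨j, rfl⟩)) h
  obtain ⟨k, hk⟩ := this
  simp at hk

private lemma eq_of_mem_zpowers_sr {n : ℕ} {j : ZMod n} {w : DihedralGroup n}
    (h : w ∈ Subgroup.zpowers (sr j)) : w = 1 ∨ w = sr j := by
  obtain ⟨k, rfl⟩ := h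
  have h2 : (sr j : DihedralGroup n) ^ (2 : ℤ) = 1 := by
    rw [show (2 : ℤ) = ((2 : ℕ) : ℤ) from rfl, zpow_natCast, pow_two, sr_mul_self]
  rcases Int.even_or_odd k with ⟨m, rfl⟩ | ⟨m, rfl⟩
  · left
    show (sr j : DihedralGroup n) ^ (m + m) = 1
    rw [show m + m = 2 * m from by ring, zpow_mul, h2, one_zpow]
  · right
    show (sr j : DihedralGroup n) ^ (2 * m + 1) = sr j
    rw [zpow_add, zpow_mul, h2, one_zpow, one_mul, zpow_one]

private lemma coPE_adj_iff {n : ℕ} [NeZero n] {x y : DihedralGroup n} :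
    (coPE (DihedralGroup n)).Adj x y ↔
      x ≠ y ∧ x ≠ 1 ∧ y ≠ 1 ∧ ¬∃ i j : ZMod n, x = r i ∧ y = r j := by
  constructor
  · rintro ⟨hxy, hz⟩
    refine ⟨hxy, ?_, ?_, ?_⟩
    · rintro rfl; exact hz ⟨y, Subgroup.one_mem _, Subgroup.mem_zpowers y⟩
    · rintro rfl; exact hz ⟨x, Subgroup.mem_zpowers x, Subgroup.one_mem _⟩
    · rintro ⟨i, j, rfl, rfl⟩
      refine hz ⟨r 1, ⟨(i.val : ℤ), ?_⟩, ⟨(j.val : ℤ), ?_⟩⟩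
      · show (r 1 : DihedralGroup n) ^ (i.val : ℤ) = r i
        rw [zpow_natCast, r_one_pow, ZMod.natCast_val, ZMod.cast_id]
      · show (r 1 : DihedralGroup n) ^ (j.val : ℤ) = r j
        rw [zpow_natCast, r_one_pow, ZMod.natCast_val, ZMod.cast_id]
  · rintro ⟨hxy, hx1, hy1, hrot⟩
    refine ⟨hxy, ?_⟩
    rintro ⟨z, hxz, hyz⟩
    cases z with
    | r j =>
      obtain ⟨i1, rfl⟩ := (Subgroup.zpowers_le.mpr (show r j ∈ rotSub n from ⟨j, rfl⟩)) hxz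
      obtain ⟨i2, rfl⟩ := (Subgroup.zpowers_le.mpr (show r j ∈ rotSub n from ⟨j, rfl⟩)) hyz
      exact hrot ⟨i1, i2, rfl, rfl⟩
    | sr j =>
      rcases eq_of_mem_zpowers_sr hxz with hx | hx
      · exact hx1 hx
      rcases eq_of_mem_zpowers_sr hyz with hy | hy
      · exact hy1 hy
      exact hxy (hx.trans hy.symm)

private lemma sr_ne_one {n : ℕ} (i : ZMod n) : (sr i : DihedralGroup n) ≠ 1 := by
  rw [one_def]; exact fun h => by cases h

private lemma mem_nonIsolated_iff {n : ℕ} [NeZero n] [Fact (1 < n)] {x : DihedralGroup n} :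
    x ∈ nonIsolated (DihedralGroup n) ↔ x ≠ 1 := by
  constructor
  · rintro ⟨y, hadj⟩; exact (coPE_adj_iff.mp hadj).2.1
  · intro hx
    cases x with
    | r i =>
      refine ⟨sr 0, coPE_adj_iff.mpr ⟨by simp, hx, sr_ne_one 0, ?_⟩⟩
      rintro ⟨a, b, -, h⟩
      simp at h
    | sr i =>
      refine ⟨sr (i + 1), coPE_adj_iff.mpr ⟨?_, sr_ne_one i, sr_ne_one (i + 1), ?_⟩⟩
      · simp only [ne_eq, sr.injEq, left_eq_add]
        exact one_ne_zero
      · rintro ⟨a, b, h, -⟩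
        simp at h

open SimpleGraph Walk

private lemma find_incident {V : Type*} {G : SimpleGraph V} {u : V} {p : G.Walk u u}
    {a x : V} (w : G.Walk a x) {y : V} (hxy : G.Adj x y)
    (he : s(x, y) ∉ p.edges) :
    a ∈ p.support → ∃ c d, G.Adj c d ∧ c ∈ p.support ∧ s(c, d) ∉ p.edges := by
  induction w with
  | nil => exact fun ha => ⟨_, _, hxy, ha, he⟩
  | @cons a' b' c' h w ih =>
    intro ha
    by_cases hm : s(a', b') ∈ p.edges
    · exact ih hxy he (p.snd_mem_support_of_mem_edges hm)
    · exact ⟨_, _, h, ha, hm⟩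

theorem exists_eulerian {V : Type*} [Fintype V] [DecidableEq V] {G : SimpleGraph V}
    [DecidableRel G.Adj] (hconn : G.Connected) (heven : ∀ v : V, Even (G.degree v)) :
    ∃ (v : V) (p : G.Walk v v), p.IsEulerian := by
  classical
  obtain ⟨v0⟩ := hconn.nonempty
  set S : Set ℕ := {ℓ | ∃ (u v : V) (p : G.Walk u v), p.IsTrail ∧ p.length = ℓ} with hS
  have hne : S.Nonempty := ⟨0, v0, v0, .nil, IsTrail.nil, rfl⟩
  have hbdd : BddAbove S := by
    refine ⟨G.edgeFinset.card, ?_⟩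
    rintro ℓ ⟨u, v, p, hp, rfl⟩
    calc p.length = p.edges.length := (p.length_edges).symm
      _ = p.edges.toFinset.card := (List.toFinset_card_of_nodup hp.edges_nodup).symm
      _ ≤ G.edgeFinset.card := Finset.card_le_card (fun e he => by
          rw [mem_edgeFinset]
          exact p.edges_subset_edgeSet (List.mem_toFinset.mp he))
  obtain ⟨u, v, p, hp, hlen⟩ := Nat.sSup_mem hne hbdd
  have hmax : ∀ (a b : V) (q : G.Walk a b), q.IsTrail → q.length ≤ p.length := by
    intro a b q hq
    rw [hlen]
    exact le_csSup hbdd ⟨a, b, q, hq, rfl⟩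
  have huv : u = v := by
    by_contra hne'
    have hall : ∀ w, G.Adj v w → s(v, w) ∈ p.edges := by
      intro w hw
      by_contra hnot
      have hq : (p.concat hw).IsTrail := by
        rw [isTrail_def, Walk.edges_concat]
        exact hp.edges_nodup.concat hnot
      have := hmax _ _ _ hq
      rw [Walk.length_concat] at this
      omega
    have hdeg : G.degree v = p.edges.countP (fun e => v ∈ e) := by
      rw [← card_incidenceFinset_eq_degree, List.countP_eq_length_filter,
        ← List.toFinset_card_of_nodup (hp.edges_nodup.filter _)]
      congr 1
      ext e
      simp only [List.mem_toFinset, List.mem_filter, mem_incidenceFinset, incidenceSet,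
        Set.mem_sep_iff, decide_eq_true_eq]
      constructor
      · rintro ⟨h1, h2⟩
        refine ⟨?_, h2⟩
        rw [← Sym2.other_spec h2] at h1 ⊢
        exact hall _ (G.mem_edgeSet.mp h1)
      · rintro ⟨h1, h2⟩
        exact ⟨p.edges_subset_edgeSet h1, h2⟩
    have hpar := (hp.even_countP_edges_iff v).mp (by rw [← hdeg]; exact heven v)
    exact (hpar hne').2 rfl
  subst huv
  refine ⟨u, p, hp.isEulerian_of_forall_mem ?_⟩
  intro e he
  by_contra hnot
  induction e using Sym2.ind with
  | _ x y =>
    rw [SimpleGraph.mem_edgeSet] at he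
    obtain ⟨w⟩ := hconn.preconnected u x
    obtain ⟨c, d, hcd, hcs, hce⟩ := find_incident w he hnot p.start_mem_support
    have hq : (Walk.cons hcd.symm (p.rotate c hcs)).IsTrail := by
      rw [isTrail_cons]
      refine ⟨hp.rotate hcs, fun hm => hce ?_⟩
      rw [Sym2.eq_swap]
      exact ((p.rotate_edges c hcs).perm.mem_iff).mp hm
    have := hmax _ _ _ hq
    rw [Walk.length_cons] at this
    have hlr : (p.rotate c hcs).length = p.length := by
      rw [← length_edges, ← length_edges]
      exact (p.rotate_edges c hcs).perm.length_eq
    omega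

open SimpleGraph in
theorem coPEstar_dihedral_eulerian_iff (n : ℕ) (hn : 3 ≤ n) :
    IsEulerianGraph (coPEstar (DihedralGroup n)) ↔ Even n := by
  classical
  haveI : NeZero n := ⟨by omega⟩
  haveI : Fact (1 < n) := ⟨by omega⟩
  have r_ne_one : ∀ i : ZMod n, i ≠ 0 → (r i : DihedralGroup n) ≠ 1 := by
    intro i hi h
    rw [one_def] at h
    exact hi (r.inj h)
  have r_ne_zero_of_mem : ∀ {i : ZMod n},
      (r i : DihedralGroup n) ∈ nonIsolated (DihedralGroup n) → i ≠ 0 := by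
    intro i hm h0
    exact mem_nonIsolated_iff.mp hm (by rw [h0]; exact one_def.symm)
  let vR : {i : ZMod n // i ≠ 0} → ↥(nonIsolated (DihedralGroup n)) := fun i =>
    ⟨r i.1, mem_nonIsolated_iff.mpr (r_ne_one i.1 i.2)⟩
  let vS : ZMod n → ↥(nonIsolated (DihedralGroup n)) := fun i =>
    ⟨sr i, mem_nonIsolated_iff.mpr (sr_ne_one i)⟩
  have hadjst : ∀ a b : ↥(nonIsolated (DihedralGroup n)),
      (coPEstar (DihedralGroup n)).Adj a b ↔ (coPE (DihedralGroup n)).Adj a.1 b.1 :=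
    fun a b => Iff.rfl
  -- adjacency facts
  have hadjRS : ∀ (i : {i : ZMod n // i ≠ 0}) (j : ZMod n),
      (coPE (DihedralGroup n)).Adj (r i.1) (sr j) := by
    intro i j
    refine coPE_adj_iff.mpr ⟨by simp, r_ne_one i.1 i.2, sr_ne_one j, ?_⟩
    rintro ⟨a, b, -, h⟩
    simp at h
  have hadjSS : ∀ (i j : ZMod n), i ≠ j → (coPE (DihedralGroup n)).Adj (sr i) (sr j) := by
    intro i j hij
    refine coPE_adj_iff.mpr ⟨by simp [hij], sr_ne_one i, sr_ne_one j, ?_⟩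
    rintro ⟨a, b, h, -⟩
    simp at h
  -- connectivity
  have hconn : (coPEstar (DihedralGroup n)).Connected := by
    have key : ∀ a : ↥(nonIsolated (DihedralGroup n)), a ≠ vS 0 →
        (coPEstar (DihedralGroup n)).Adj a (vS 0) := by
      rintro ⟨w, hm⟩ ha
      rw [hadjst]
      cases w with
      | r i => exact hadjRS ⟨i, r_ne_zero_of_mem hm⟩ 0
      | sr i =>
        refine hadjSS i 0 ?_
        intro h0
        subst h0
        exact ha (Subtype.ext rfl)
    rw [connected_iff]
    refine ⟨fun a b => ?_, ⟨vS 0⟩⟩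
    by_cases ha : a = vS 0
    · subst ha
      by_cases hb : b = vS 0
      · subst hb; exact Reachable.refl _
      · exact ((key b hb).symm).reachable
    · by_cases hb : b = vS 0
      · subst hb; exact (key a ha).reachable
      · exact (key a ha).reachable.trans ((key b hb).symm.reachable)
  -- degree of rotations
  have hdegR : ∀ i : {i : ZMod n // i ≠ 0}, (coPEstar (DihedralGroup n)).degree (vR i) = n := by
    intro i
    rw [← card_neighborSet_eq_degree]
    let f : ZMod n → ↥((coPEstar (DihedralGroup n)).neighborSet (vR i)) := fun j =>
      ⟨vS j, (hadjst _ _).mpr (hadjRS i j)⟩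
    have hf : Function.Bijective f := by
      constructor
      · intro j k h
        rw [Subtype.ext_iff, Subtype.ext_iff] at h
        simp only [f, vS] at h
        simpa using h
      · rintro ⟨⟨w, hm⟩, hy⟩
        cases w with
        | r k =>
          exact absurd ⟨i.1, k, rfl, rfl⟩ (coPE_adj_iff.mp ((hadjst _ _).mp hy)).2.2.2
        | sr k => exact ⟨k, Subtype.ext (Subtype.ext rfl)⟩
    rw [Fintype.card_congr (Equiv.ofBijective f hf).symm, ZMod.card]
  -- degree of reflections is even
  have hdegS : ∀ i : ZMod n, Even ((coPEstar (DihedralGroup n)).degree (vS i)) := by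
    intro i
    rw [← card_neighborSet_eq_degree]
    let f : ({j : ZMod n // j ≠ 0} ⊕ {j : ZMod n // j ≠ i}) →
        ↥((coPEstar (DihedralGroup n)).neighborSet (vS i)) := fun j =>
      match j with
      | Sum.inl j => ⟨vR j, (hadjst _ _).mpr ((hadjRS j i).symm)⟩
      | Sum.inr j => ⟨vS j.1, (hadjst _ _).mpr (hadjSS i j.1 (Ne.symm j.2))⟩
    have hf : Function.Bijective f := by
      constructor
      · rintro (⟨j, hj⟩ | ⟨j, hj⟩) (⟨k, hk⟩ | ⟨k, hk⟩) h <;>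
          rw [Subtype.ext_iff, Subtype.ext_iff] at h <;>
          simp only [f, vR, vS] at h
        · simp only [r.injEq] at h
          simp [h]
        · simp at h
        · simp at h
        · simp only [sr.injEq] at h
          simp [h]
      · rintro ⟨⟨w, hm⟩, hy⟩
        cases w with
        | r k => exact ⟨Sum.inl ⟨k, r_ne_zero_of_mem hm⟩, Subtype.ext (Subtype.ext rfl)⟩
        | sr k =>
          refine ⟨Sum.inr ⟨k, ?_⟩, Subtype.ext (Subtype.ext rfl)⟩
          intro hki
          subst hki
          exact (coPE_adj_iff.mp ((hadjst _ _).mp hy)).1 rfl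
    rw [Fintype.card_congr (Equiv.ofBijective f hf).symm, Fintype.card_sum]
    have hcard : Fintype.card {j : ZMod n // j ≠ 0} = Fintype.card {j : ZMod n // j ≠ i} :=
      Fintype.card_congr (Equiv.subtypeEquiv (Equiv.addRight i) (by intro a; simp))
    rw [hcard]
    exact ⟨_, rfl⟩
  constructor
  · rintro ⟨-, v, p, hE⟩
    have hdeg : Even ((coPEstar (DihedralGroup n)).degree (vR ⟨1, one_ne_zero⟩)) :=
      (@SimpleGraph.Walk.IsEulerian.even_degree_iff _ _ (fun a b => Classical.propDecidable _) _ _ _ _ hE _ _).mpr (fun h => absurd rfl h)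
    rwa [hdegR] at hdeg
  · intro hne
    refine ⟨hconn, @exists_eulerian _ _ (fun a b => Classical.propDecidable _) _ _ hconn ?_⟩
    rintro ⟨w, hm⟩
    cases w with
    | r i =>
      have h1 : (⟨r i, hm⟩ : ↥(nonIsolated (DihedralGroup n))) = vR ⟨i, r_ne_zero_of_mem hm⟩ :=
        Subtype.ext rfl
      rw [h1, hdegR]
      exact hne
    | sr i =>
      have h1 : (⟨sr i, hm⟩ : ↥(nonIsolated (DihedralGroup n))) = vS i := Subtype.ext rfl
      rw [h1]
      exact hdegS i
end

section
/- Let n ≥ 2 and let Q_{4n} be the dicyclic (generalized quaternion) group of order 4n. Then the graph co-P_E(Q_{4n}*) is Eulerian (connected with a closed trail traversing every edge exactly once). -/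
/-! ### Auxiliary: existence of Eulerian circuits (Euler's theorem) -/

namespace EulerAux

open SimpleGraph

variable {V : Type*} [DecidableEq V] {G : SimpleGraph V}

lemma exists_incident_notin {u : V} (p : G.Walk u u) :
    ∀ {x t : V}, G.Walk x t → t ∈ p.support →
      (∃ y, G.Adj x y ∧ s(x, y) ∉ p.edges) →
      ∃ z, z ∈ p.support ∧ ∃ w, G.Adj z w ∧ s(z, w) ∉ p.edges
  | x, _, .nil, ht, hx => ⟨x, ht, hx⟩
  | x, t, .cons h q, ht, hx => by
    by_cases hxs : x ∈ p.support
    · exact ⟨x, hxs, hx⟩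
    · refine exists_incident_notin p q ht ⟨_, h.symm, ?_⟩
      rw [Sym2.eq_swap]
      exact fun hmem => hxs (SimpleGraph.Walk.fst_mem_support_of_mem_edges p hmem)

lemma exists_extension [Fintype V] [DecidableRel G.Adj] {u v : V} {p : G.Walk u v}
    (hp : p.IsTrail) (hne : u ≠ v) (heven : Even (G.degree v)) :
    ∃ w, G.Adj v w ∧ s(v, w) ∉ p.edges := by
  have hodd : ¬ Even (p.edges.countP fun e => v ∈ e) := by
    rw [hp.even_countP_edges_iff v]
    simp [hne]
  classical
  set F : Finset (Sym2 V) := hp.edgesFinset.filter (fun e => v ∈ e) with hF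
  have hcount : (p.edges.countP fun e => v ∈ e) = F.card := by
    simp [hF, Finset.filter, SimpleGraph.Walk.IsTrail.edgesFinset, List.countP_eq_length_filter]
  have hsub : F ⊆ G.incidenceFinset v := by
    intro e he
    rw [Finset.mem_filter] at he
    rw [mem_incidenceFinset]
    exact ⟨p.edges_subset_edgeSet (Multiset.mem_coe.mp he.1), by simpa using he.2⟩
  have hneq : F ≠ G.incidenceFinset v := by
    intro h
    rw [hcount, h, card_incidenceFinset_eq_degree] at hodd
    exact hodd heven
  obtain ⟨e, heI, heF⟩ := Finset.exists_of_ssubset (hsub.ssubset_of_ne hneq)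
  rw [mem_incidenceFinset] at heI
  obtain ⟨w, rfl⟩ := Sym2.mem_iff_exists.mp heI.2
  refine ⟨w, (G.mk'_mem_incidenceSet_left_iff).mp heI, fun hmem => ?_⟩
  exact heF (Finset.mem_filter.mpr ⟨Multiset.mem_coe.mpr hmem, by simp⟩)

theorem euler_exists {V : Type*} [Fintype V] [DecidableEq V] {G : SimpleGraph V}
    [DecidableRel G.Adj] (hconn : G.Connected) (heven : ∀ v, Even (G.degree v)) :
    ∃ (v : V) (p : G.Walk v v), p.IsEulerian := by
  classical
  obtain ⟨v0⟩ := hconn.nonempty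
  set S : Set ℕ := {k | ∃ (x y : V) (q : G.Walk x y), q.IsTrail ∧ q.length = k} with hS
  have hS0 : 0 ∈ S := ⟨v0, v0, .nil, SimpleGraph.Walk.IsTrail.nil, rfl⟩
  have hbdd : BddAbove S := by
    refine ⟨G.edgeFinset.card, ?_⟩
    rintro k ⟨x, y, q, hq, rfl⟩
    exact hq.length_le_card_edgeFinset
  obtain ⟨u, v, p, hp, hlen⟩ := Nat.sSup_mem ⟨0, hS0⟩ hbdd
  have hmax : ∀ (x y : V) (q : G.Walk x y), q.IsTrail → q.length ≤ p.length := by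
    intro x y q hq
    rw [hlen]
    exact le_csSup hbdd ⟨x, y, q, hq, rfl⟩
  have huv : u = v := by
    by_contra hne
    obtain ⟨w, hadj, hnotin⟩ := exists_extension hp hne (heven v)
    have hq : (SimpleGraph.Walk.cons hadj.symm p.reverse).IsTrail := by
      rw [SimpleGraph.Walk.isTrail_cons]
      refine ⟨hp.reverse, ?_⟩
      rw [SimpleGraph.Walk.edges_reverse, List.mem_reverse, Sym2.eq_swap]
      exact hnotin
    have := hmax _ _ _ hq
    simp [SimpleGraph.Walk.length_cons, SimpleGraph.Walk.length_reverse] at this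
  subst huv
  refine ⟨u, p, hp.isEulerian_of_forall_mem ?_⟩
  by_contra hmiss
  push_neg at hmiss
  obtain ⟨e, heE, hnotin⟩ := hmiss
  induction e using Sym2.ind with
  | _ x y =>
  rw [SimpleGraph.mem_edgeSet] at heE
  obtain ⟨q⟩ := hconn x u
  obtain ⟨z, hz, w, hzw, hnotin'⟩ :=
    exists_incident_notin p q p.start_mem_support ⟨y, heE, hnotin⟩
  have hrot : (p.rotate z hz).IsTrail := hp.rotate hz
  have hq : (SimpleGraph.Walk.cons hzw.symm (p.rotate z hz)).IsTrail := by
    rw [SimpleGraph.Walk.isTrail_cons]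
    refine ⟨hrot, ?_⟩
    rw [(p.rotate_edges z hz).mem_iff, Sym2.eq_swap]
    exact hnotin'
  have hlenrot : (p.rotate z hz).length = p.length := by
    rw [← SimpleGraph.Walk.length_edges, ← SimpleGraph.Walk.length_edges]
    exact (p.rotate_edges z hz).perm.length_eq
  have := hmax _ _ _ hq
  rw [SimpleGraph.Walk.length_cons, hlenrot] at this
  omega

/-- A finset admitting a fixed-point-free involution has even cardinality. -/
lemma even_card_of_involution {α : Type*} [DecidableEq α] (f : α → α) (s : Finset α) :
    (∀ x ∈ s, f x ∈ s) → (∀ x ∈ s, f (f x) = x) → (∀ x ∈ s, f x ≠ x) → Even s.card := by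
  induction s using Finset.strongInductionOn with
  | _ s ih =>
    intro hmem hinv hne
    rcases s.eq_empty_or_nonempty with rfl | ⟨x, hx⟩
    · simp
    · have hfx : f x ∈ s := hmem x hx
      have hxne : f x ≠ x := hne x hx
      have hfx' : f x ∈ s.erase x := Finset.mem_erase.mpr ⟨hxne, hfx⟩
      set t := (s.erase x).erase (f x) with ht
      have htsub : t ⊆ s := fun y hy =>
        Finset.mem_of_mem_erase (Finset.mem_of_mem_erase hy)
      have hxt : x ∉ t := fun h =>
        (Finset.mem_erase.mp (Finset.mem_of_mem_erase h)).1 rfl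
      have hss : t ⊂ s := Finset.ssubset_iff_of_subset htsub |>.mpr ⟨x, hx, hxt⟩
      have hmem_t : ∀ y ∈ t, y ∈ s ∧ y ≠ x ∧ y ≠ f x := by
        intro y hy
        obtain ⟨hyfx, hy'⟩ := Finset.mem_erase.mp hy
        obtain ⟨hyx, hys⟩ := Finset.mem_erase.mp hy'
        exact ⟨hys, hyx, hyfx⟩
      have hF : ∀ y ∈ t, f y ∈ t := by
        intro y hy
        obtain ⟨hys, hyx, hyfx⟩ := hmem_t y hy
        refine Finset.mem_erase.mpr ⟨?_, Finset.mem_erase.mpr ⟨?_, hmem y hys⟩⟩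
        · intro h
          exact hyx (by rw [← hinv y hys, h, hinv x hx])
        · intro h
          exact hyfx (by rw [← hinv y hys, h])
      have heven : Even t.card :=
        ih t hss hF (fun y hy => hinv y (hmem_t y hy).1) (fun y hy => hne y (hmem_t y hy).1)
      have hcard : s.card = t.card + 2 := by
        have h1 : (s.erase x).card = s.card - 1 := Finset.card_erase_of_mem hx
        have h2 : t.card = (s.erase x).card - 1 := Finset.card_erase_of_mem hfx'
        have h3 : 0 < s.card := Finset.card_pos.mpr ⟨x, hx⟩
        have h4 : 0 < (s.erase x).card := Finset.card_pos.mpr ⟨f x, hfx'⟩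
        omega
      rw [hcard]
      exact heven.add even_two

end EulerAux

/-! ### Auxiliary facts about the dicyclic groups -/

namespace QAux
open QuaternionGroup

variable {n : ℕ}

section ZModFacts
variable (hn : 2 ≤ n)
include hn

lemma val_n : ((n : ZMod (2 * n))).val = n := ZMod.val_natCast_of_lt (by omega)

lemma n_ne_zero : (n : ZMod (2 * n)) ≠ 0 := by
  haveI : NeZero (2 * n) := ⟨by omega⟩
  intro h
  have := val_n hn
  rw [h, ZMod.val_zero] at this
  omega

lemma n_ne_one : (n : ZMod (2 * n)) ≠ 1 := by
  haveI : NeZero (2 * n) := ⟨by omega⟩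
  haveI : Fact (1 < 2 * n) := ⟨by omega⟩
  intro h
  have := val_n hn
  rw [h, ZMod.val_one] at this
  omega

omit hn in
lemma n_add_n : (n : ZMod (2 * n)) + n = 0 := by
  have h : (((n + n : ℕ)) : ZMod (2 * n)) = 0 := by
    rw [show n + n = 2 * n by ring]
    exact ZMod.natCast_self _
  push_cast at h
  exact h

omit hn in
lemma neg_n : -(n : ZMod (2 * n)) = n := by
  rw [neg_eq_iff_add_eq_zero]
  have := n_add_n (n := n)
  rwa [add_comm] at this

lemma add_self_eq_zero_iff (i : ZMod (2 * n)) : i + i = 0 ↔ i = 0 ∨ i = n := by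
  haveI : NeZero (2 * n) := ⟨by omega⟩
  constructor
  · intro h
    have hval : (i.val + i.val) % (2 * n) = 0 := by
      rw [← ZMod.val_add, h, ZMod.val_zero]
    have hlt : i.val < 2 * n := ZMod.val_lt i
    obtain ⟨c, hc⟩ := Nat.dvd_of_mod_eq_zero hval
    have hc2 : c < 2 := by
      by_contra hge
      push_neg at hge
      have : 2 * n * 2 ≤ 2 * n * c := Nat.mul_le_mul_left _ hge
      omega
    have : i.val = 0 ∨ i.val = n := by
      interval_cases c <;> omega
    rcases this with h' | h'
    · left; exact (ZMod.val_eq_zero i).mp h'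
    · right
      have : i.val = ((n : ZMod (2 * n))).val := by rw [val_n hn, h']
      exact ZMod.val_injective _ this
  · rintro (rfl | rfl)
    · simp
    · exact n_add_n

end ZModFacts

lemma a_inv (i : ZMod (2 * n)) : (a i : QuaternionGroup n)⁻¹ = a (-i) := by
  apply inv_eq_of_mul_eq_one_right
  rw [a_mul_a, add_neg_cancel, one_def]

lemma a_pow (i : ZMod (2 * n)) (k : ℕ) :
    (a i : QuaternionGroup n) ^ k = a ((k : ZMod (2 * n)) * i) := by
  induction k with
  | zero => rw [pow_zero, Nat.cast_zero, zero_mul, one_def]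
  | succ k ih =>
    rw [pow_succ, ih, a_mul_a]
    congr 1
    push_cast
    ring

lemma a_zpow (i : ZMod (2 * n)) (m : ℤ) :
    (a i : QuaternionGroup n) ^ m = a ((m : ZMod (2 * n)) * i) := by
  cases m with
  | ofNat k =>
    rw [Int.ofNat_eq_coe, zpow_natCast, a_pow]
    norm_cast
  | negSucc k =>
    rw [zpow_negSucc, a_pow, a_inv]
    congr 1
    rw [Int.cast_negSucc]
    push_cast
    ring

lemma exists_of_mem_zpowers_a {i : ZMod (2 * n)} {x : QuaternionGroup n}
    (hx : x ∈ Subgroup.zpowers (a i)) : ∃ k, x = a k := by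
  obtain ⟨m, rfl⟩ := Subgroup.mem_zpowers_iff.mp hx
  exact ⟨_, a_zpow i m⟩

lemma xa_not_mem_zpowers_a (i j : ZMod (2 * n)) :
    (xa j : QuaternionGroup n) ∉ Subgroup.zpowers (a i) := by
  intro h
  obtain ⟨k, hk⟩ := exists_of_mem_zpowers_a h
  cases hk

lemma a_mem_zpowers_a_one (i : ZMod (2 * n)) [NeZero (2 * n)] :
    (a i : QuaternionGroup n) ∈ Subgroup.zpowers (a 1) := by
  refine Subgroup.mem_zpowers_iff.mpr ⟨(i.val : ℤ), ?_⟩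
  rw [zpow_natCast, a_one_pow]
  congr 1
  exact ZMod.natCast_rightInverse i

lemma xa_pow_three (hn : 2 ≤ n) (j : ZMod (2 * n)) :
    (xa j : QuaternionGroup n) ^ 3 = xa ((n : ZMod (2 * n)) + j) := by
  rw [pow_succ, xa_sq, a_mul_xa]
  congr 1
  rw [sub_eq_add_neg, neg_n, add_comm]

lemma mem_zpowers_xa_iff (hn : 2 ≤ n) (j : ZMod (2 * n)) {x : QuaternionGroup n} :
    x ∈ Subgroup.zpowers (xa j) ↔
      x = a 0 ∨ x = a n ∨ x = xa j ∨ x = xa ((n : ZMod (2 * n)) + j) := by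
  haveI : NeZero n := ⟨by omega⟩
  constructor
  · intro hx
    obtain ⟨m, rfl⟩ := Subgroup.mem_zpowers_iff.mp hx
    have key : (xa j : QuaternionGroup n) ^ m = xa j ^ (m % 4) := by
      conv_lhs => rw [← zpow_mod_orderOf]
      norm_num [orderOf_xa]
    rw [key]
    have h4 : m % 4 = 0 ∨ m % 4 = 1 ∨ m % 4 = 2 ∨ m % 4 = 3 := by omega
    rcases h4 with h | h | h | h <;> rw [h]
    · left; rw [zpow_zero, one_def]
    · right; right; left; rw [zpow_one]
    · right; left
      rw [show (2:ℤ) = ((2:ℕ):ℤ) by norm_num, zpow_natCast, xa_sq]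
    · right; right; right
      rw [show (3:ℤ) = ((3:ℕ):ℤ) by norm_num, zpow_natCast, xa_pow_three hn]
  · rintro (rfl | rfl | rfl | rfl)
    · rw [← one_def]; exact Subgroup.one_mem _
    · exact Subgroup.mem_zpowers_iff.mpr ⟨2, by
        rw [show (2:ℤ) = ((2:ℕ):ℤ) by norm_num, zpow_natCast, xa_sq]⟩
    · exact Subgroup.mem_zpowers _
    · exact Subgroup.mem_zpowers_iff.mpr ⟨3, by
        rw [show (3:ℤ) = ((3:ℕ):ℤ) by norm_num, zpow_natCast, xa_pow_three hn]⟩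

/-! #### Adjacency in `coPE (QuaternionGroup n)` -/

section Adjacency
variable (hn : 2 ≤ n)
include hn

lemma not_adj_a_a (i j : ZMod (2 * n)) :
    ¬ (coPE (QuaternionGroup n)).Adj (a i) (a j) := by
  haveI : NeZero (2 * n) := ⟨by omega⟩
  rintro ⟨-, h⟩
  exact h ⟨a 1, a_mem_zpowers_a_one i, a_mem_zpowers_a_one j⟩

lemma adj_a_xa_iff (i j : ZMod (2 * n)) :
    (coPE (QuaternionGroup n)).Adj (a i) (xa j) ↔
      i ≠ 0 ∧ i ≠ (n : ZMod (2 * n)) := by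
  constructor
  · rintro ⟨-, h⟩
    constructor
    · rintro rfl
      exact h ⟨xa j, by rw [mem_zpowers_xa_iff hn]; left; rfl, Subgroup.mem_zpowers _⟩
    · rintro rfl
      exact h ⟨xa j, by rw [mem_zpowers_xa_iff hn]; right; left; rfl,
        Subgroup.mem_zpowers _⟩
  · rintro ⟨h0, hnn⟩
    refine ⟨(by intro h; cases h), ?_⟩
    rintro ⟨z, hz1, hz2⟩
    cases z with
    | a m => exact xa_not_mem_zpowers_a m j hz2
    | xa m =>
      rw [mem_zpowers_xa_iff hn] at hz1
      rcases hz1 with h | h | h | h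
      · injection h with h'; exact h0 h'
      · injection h with h'; exact hnn h'
      · cases h
      · cases h

lemma adj_xa_xa_iff (i j : ZMod (2 * n)) :
    (coPE (QuaternionGroup n)).Adj (xa i) (xa j) ↔
      j ≠ i ∧ j ≠ (n : ZMod (2 * n)) + i := by
  constructor
  · rintro ⟨hne, h⟩
    constructor
    · rintro rfl
      exact hne rfl
    · rintro rfl
      exact h ⟨xa i, Subgroup.mem_zpowers _, by
        rw [mem_zpowers_xa_iff hn]; right; right; right; rfl⟩
  · rintro ⟨h1, h2⟩
    refine ⟨fun h => by injection h with h'; exact h1 h'.symm, ?_⟩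
    rintro ⟨z, hz1, hz2⟩
    cases z with
    | a m => exact xa_not_mem_zpowers_a m i hz1
    | xa m =>
      rw [mem_zpowers_xa_iff hn] at hz1 hz2
      rcases hz1 with h | h | h | h
      · cases h
      · cases h
      · injection h with hi
        rcases hz2 with h' | h' | h' | h'
        · cases h'
        · cases h'
        · injection h' with hj
          exact h1 (by rw [hj, ← hi])
        · injection h' with hj
          exact h2 (by rw [hj, ← hi])
      · injection h with hi
        rcases hz2 with h' | h' | h' | h'
        · cases h'
        · cases h'
        · injection h' with hj
          apply h2
          rw [hj, hi, ← add_assoc, n_add_n, zero_add]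
        · injection h' with hj
          exact h1 (by rw [hj, ← hi])

lemma mem_nonIsolated_a_iff (i : ZMod (2 * n)) :
    (a i : QuaternionGroup n) ∈ nonIsolated (QuaternionGroup n) ↔
      i ≠ 0 ∧ i ≠ (n : ZMod (2 * n)) := by
  constructor
  · rintro ⟨y, hy⟩
    cases y with
    | a j => exact absurd hy (not_adj_a_a hn i j)
    | xa j => exact (adj_a_xa_iff hn i j).mp hy
  · intro h
    exact ⟨xa 0, (adj_a_xa_iff hn i 0).mpr h⟩

lemma mem_nonIsolated_xa (j : ZMod (2 * n)) :
    (xa j : QuaternionGroup n) ∈ nonIsolated (QuaternionGroup n) := by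
  haveI : Fact (1 < 2 * n) := ⟨by omega⟩
  refine ⟨xa (j + 1), (adj_xa_xa_iff hn j (j + 1)).mpr ⟨?_, ?_⟩⟩
  · intro h
    exact one_ne_zero (add_eq_left.mp h)
  · intro h
    rw [add_comm j 1] at h
    exact n_ne_one hn (add_right_cancel h).symm

end Adjacency

/-- The fixed-point-free involution used to show degrees are even. -/
def qflip : QuaternionGroup n → QuaternionGroup n
  | .a i => .a (-i)
  | .xa j => .xa ((n : ZMod (2 * n)) + j)

lemma qflip_a (i : ZMod (2 * n)) : qflip (a i) = a (-i) := rfl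

lemma qflip_xa (j : ZMod (2 * n)) :
    qflip (xa j) = xa ((n : ZMod (2 * n)) + j) := rfl

lemma qflip_invol (x : QuaternionGroup n) : qflip (qflip x) = x := by
  cases x with
  | a i => rw [qflip_a, qflip_a, neg_neg]
  | xa j => rw [qflip_xa, qflip_xa, ← add_assoc, n_add_n, zero_add]

lemma qflip_mem (hn : 2 ≤ n) {x : QuaternionGroup n}
    (hx : x ∈ nonIsolated (QuaternionGroup n)) :
    qflip x ∈ nonIsolated (QuaternionGroup n) := by
  cases x with
  | a i =>
    rw [mem_nonIsolated_a_iff hn] at hx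
    rw [qflip_a, mem_nonIsolated_a_iff hn]
    refine ⟨fun h => hx.1 (neg_eq_zero.mp h), fun h => hx.2 ?_⟩
    rw [← neg_neg i, h, neg_n]
  | xa j =>
    rw [qflip_xa]
    exact mem_nonIsolated_xa hn _

end QAux

theorem coPEstar_dicyclic_eulerian (n : ℕ) (hn : 2 ≤ n) :
    IsEulerianGraph (coPEstar (QuaternionGroup n)) := by
  classical
  haveI : NeZero n := ⟨by omega⟩
  open QuaternionGroup QAux in
  have hadj : ∀ (x y : nonIsolated (QuaternionGroup n)),
      (coPEstar (QuaternionGroup n)).Adj x y ↔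
        (coPE (QuaternionGroup n)).Adj x.1 y.1 := fun x y => Iff.rfl
  haveI : Fintype ↥(nonIsolated (QuaternionGroup n)) := Fintype.ofFinite _
  -- connectivity
  have hx0 : (QuaternionGroup.xa 0 : QuaternionGroup n) ∈ nonIsolated (QuaternionGroup n) :=
    QAux.mem_nonIsolated_xa hn 0
  set x0 : ↥(nonIsolated (QuaternionGroup n)) := ⟨QuaternionGroup.xa 0, hx0⟩ with hx0def
  have hreach : ∀ w, (coPEstar (QuaternionGroup n)).Reachable w x0 := by
    rintro ⟨w, hw⟩
    cases w with
    | a i =>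
      obtain ⟨h0, hnn⟩ := (QAux.mem_nonIsolated_a_iff hn i).mp hw
      exact SimpleGraph.Adj.reachable
        ((hadj _ _).mpr ((QAux.adj_a_xa_iff hn i 0).mpr ⟨h0, hnn⟩))
    | xa j =>
      by_cases hj0 : j = 0
      · subst hj0
        exact SimpleGraph.Reachable.refl _
      · by_cases hjn : j = (n : ZMod (2 * n))
        · subst hjn
          have h1mem : (QuaternionGroup.a 1 : QuaternionGroup n) ∈
              nonIsolated (QuaternionGroup n) := by
            rw [QAux.mem_nonIsolated_a_iff hn]
            haveI : Fact (1 < 2 * n) := ⟨by omega⟩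
            exact ⟨one_ne_zero, fun h => QAux.n_ne_one hn h.symm⟩
          have had1 : (coPE (QuaternionGroup n)).Adj (QuaternionGroup.a 1)
              (QuaternionGroup.xa (n : ZMod (2 * n))) := by
            haveI : Fact (1 < 2 * n) := ⟨by omega⟩
            exact (QAux.adj_a_xa_iff hn 1 _).mpr
              ⟨one_ne_zero, fun h => QAux.n_ne_one hn h.symm⟩
          have had2 : (coPE (QuaternionGroup n)).Adj (QuaternionGroup.a 1)
              (QuaternionGroup.xa 0) := by
            haveI : Fact (1 < 2 * n) := ⟨by omega⟩
            exact (QAux.adj_a_xa_iff hn 1 0).mpr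
              ⟨one_ne_zero, fun h => QAux.n_ne_one hn h.symm⟩
          have r1 : (coPEstar (QuaternionGroup n)).Reachable ⟨_, hw⟩ ⟨_, h1mem⟩ :=
            SimpleGraph.Adj.reachable ((hadj ⟨_, hw⟩ ⟨_, h1mem⟩).mpr had1.symm)
          have r2 : (coPEstar (QuaternionGroup n)).Reachable ⟨_, h1mem⟩ x0 :=
            SimpleGraph.Adj.reachable ((hadj ⟨_, h1mem⟩ x0).mpr had2)
          exact r1.trans r2
        · refine SimpleGraph.Adj.reachable ((hadj _ _).mpr ?_)
          refine (QAux.adj_xa_xa_iff hn j 0).mpr ⟨fun h => hj0 h.symm, fun h => hjn ?_⟩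
          have h2 : (n : ZMod (2 * n)) + j = 0 := h.symm
          have h3 : j = -(n : ZMod (2 * n)) := eq_neg_of_add_eq_zero_right h2
          rwa [QAux.neg_n] at h3
  have hconn : (coPEstar (QuaternionGroup n)).Connected := by
    haveI : Nonempty ↥(nonIsolated (QuaternionGroup n)) := ⟨x0⟩
    exact ⟨fun u v => (hreach u).trans (hreach v).symm⟩
  -- even degrees
  have heven : ∀ v, Even ((coPEstar (QuaternionGroup n)).degree v) := by
    intro v
    rw [← SimpleGraph.card_neighborFinset_eq_degree]
    refine EulerAux.even_card_of_involution
      (fun x => ⟨QAux.qflip x.1, QAux.qflip_mem hn x.2⟩) _ ?_ ?_ ?_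
    · intro x hx
      rw [SimpleGraph.mem_neighborFinset] at hx ⊢
      rw [hadj] at hx ⊢
      obtain ⟨v', hv'⟩ := v
      obtain ⟨x', hx'⟩ := x
      dsimp only at hx ⊢
      cases v' with
      | a i =>
        cases x' with
        | a j => exact absurd hx (QAux.not_adj_a_a hn i j)
        | xa j =>
          rw [QAux.qflip_xa]
          rw [QAux.adj_a_xa_iff hn] at hx ⊢
          exact hx
      | xa m =>
        cases x' with
        | a j =>
          rw [QAux.qflip_a]
          have hj := (QAux.adj_a_xa_iff hn j m).mp hx.symm
          refine ((QAux.adj_a_xa_iff hn (-j) m).mpr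
            ⟨fun h => hj.1 (neg_eq_zero.mp h), fun h => hj.2 ?_⟩).symm
          rw [← neg_neg j, h, QAux.neg_n]
        | xa k =>
          rw [QAux.qflip_xa]
          rw [QAux.adj_xa_xa_iff hn] at hx ⊢
          obtain ⟨h1, h2⟩ := hx
          constructor
          · intro h
            apply h2
            rw [← h, ← add_assoc, QAux.n_add_n, zero_add]
          · intro h
            exact h1 (add_left_cancel h)
    · intro x _
      exact Subtype.ext (QAux.qflip_invol x.1)
    · intro x hx
      intro h
      rw [Subtype.ext_iff] at h
      obtain ⟨x', hx'⟩ := x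
      dsimp only at h
      cases x' with
      | a i =>
        rw [QAux.qflip_a] at h
        injection h with h'
        have h2 : i + i = 0 := by
          nth_rewrite 1 [← h']
          exact neg_add_cancel i
        have hmem := (QAux.mem_nonIsolated_a_iff hn i).mp hx'
        rcases (QAux.add_self_eq_zero_iff hn i).mp h2 with h3 | h3
        · exact hmem.1 h3
        · exact hmem.2 h3
      | xa j =>
        rw [QAux.qflip_xa] at h
        injection h with h'
        exact QAux.n_ne_zero hn (by
          have := congrArg (fun z => z - j) h'
          simpa using this)
  obtain ⟨v, p, hp⟩ := EulerAux.euler_exists hconn heven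
  exact ⟨hconn, v, p, by convert hp⟩
end
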